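/- Consider a max-min LP and an objective k with a single adjacent agent v. Replace v by two copies t and u with c_{kt} = c_{ku} = c_{kv}/2, duplicating each constraint adjacent to v so that one copy contains t and the other contains u (other coefficients unchanged). Then the optimum of the transformed instance equals the optimum of the original instance. -/

import Mathlib

open Finset

private lemma sum_split_aux {V : Type*} [Fintype V] [DecidableEq V] (v₀ : V) (f : V → ℝ) :
    ∑ v, f v = (∑ u : {u : V // u ≠ v₀}, f u.1) + f v₀ := by
  rw [Fintype.sum_eq_sum_compl_add v₀ f]
  congr 1
  exact (Finset.sum_subtype ({v₀}ᶜ) (p := fun u => u ≠ v₀) (fun x => by simp) f)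

/-- Splitting the unique agent `v₀` of a singleton objective `k₀` into two
copies with halved objective coefficient (each constraint adjacent to `v₀`
being duplicated so that each copy contains one copy of `v₀`, other
coefficients unchanged) preserves the optimum of the max-min LP. -/
theorem stmt_3 {V I K : Type*} [Fintype V] [Fintype I] [Fintype K]
    [DecidableEq V] [DecidableEq K] [Nonempty K]
    (A : I → V → ℝ) (C : K → V → ℝ)
    (hA : ∀ i v, 0 ≤ A i v) (hC : ∀ k v, 0 ≤ C k v)
    (k₀ : K) (v₀ : V)
    (hadj : 0 < C k₀ v₀)
    (hsingle : ∀ v, 0 < C k₀ v → v = v₀)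
    (honly : ∀ k, k ≠ k₀ → C k v₀ = 0) :
    sSup {w : ℝ | ∃ x : V → ℝ, (∀ v, 0 ≤ x v) ∧
        (∀ i, ∑ v, A i v * x v ≤ 1) ∧
        w = univ.inf' univ_nonempty (fun k => ∑ v, C k v * x v)} =
    sSup {w : ℝ | ∃ x : ({u : V // u ≠ v₀} ⊕ Bool) → ℝ,
        (∀ v, 0 ≤ x v) ∧
        (∀ p : I × Bool,
          (∑ u : {u : V // u ≠ v₀}, A p.1 u.1 * x (Sum.inl u)) +
            A p.1 v₀ * x (Sum.inr p.2) ≤ 1) ∧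
        w = univ.inf' univ_nonempty (fun k =>
          (∑ u : {u : V // u ≠ v₀}, C k u.1 * x (Sum.inl u)) +
          (∑ b : Bool, (if k = k₀ then C k₀ v₀ / 2 else 0) * x (Sum.inr b)))} := by
  set S1 : Set ℝ := {w : ℝ | ∃ x : V → ℝ, (∀ v, 0 ≤ x v) ∧
        (∀ i, ∑ v, A i v * x v ≤ 1) ∧
        w = univ.inf' univ_nonempty (fun k => ∑ v, C k v * x v)} with hS1
  set S2 : Set ℝ := {w : ℝ | ∃ x : ({u : V // u ≠ v₀} ⊕ Bool) → ℝ,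
        (∀ v, 0 ≤ x v) ∧
        (∀ p : I × Bool,
          (∑ u : {u : V // u ≠ v₀}, A p.1 u.1 * x (Sum.inl u)) +
            A p.1 v₀ * x (Sum.inr p.2) ≤ 1) ∧
        w = univ.inf' univ_nonempty (fun k =>
          (∑ u : {u : V // u ≠ v₀}, C k u.1 * x (Sum.inl u)) +
          (∑ b : Bool, (if k = k₀ then C k₀ v₀ / 2 else 0) * x (Sum.inr b)))} with hS2
  have hCzero : ∀ u : {u : V // u ≠ v₀}, C k₀ u.1 = 0 := by
    intro u
    rcases (hC k₀ u.1).lt_or_eq with h | h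
    · exact absurd (hsingle u.1 h) u.2
    · exact h.symm
  -- Direction 1 : S1 ⊆ S2
  have h12 : S1 ⊆ S2 := by
    rintro w ⟨x, hx0, hxc, rfl⟩
    refine ⟨Sum.elim (fun u => x u.1) (fun _ => x v₀), ?_, ?_, ?_⟩
    · rintro (u | b) <;> simp [hx0]
    · intro p
      have := hxc p.1
      rw [sum_split_aux v₀ (fun v => A p.1 v * x v)] at this
      simpa using this
    · refine Finset.inf'_congr _ rfl ?_
      intro k _
      rw [sum_split_aux v₀ (fun v => C k v * x v)]
      by_cases hk : k = k₀
      · rw [hk]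
        simp only [if_pos rfl, if_true, Fintype.sum_bool, Sum.elim_inr, Sum.elim_inl]
        ring
      · simp [hk, honly k hk]
  -- Direction 2 : every element of S2 is dominated by an element of S1
  have h21 : ∀ w ∈ S2, ∃ w' ∈ S1, w ≤ w' := by
    rintro w ⟨x, hx0, hxc, rfl⟩
    set m : ℝ := max (x (Sum.inr true)) (x (Sum.inr false)) with hm
    set y : V → ℝ := fun v => if h : v = v₀ then m else x (Sum.inl ⟨v, h⟩) with hy
    have hyv₀ : y v₀ = m := by simp [hy]
    have hyu : ∀ u : {u : V // u ≠ v₀}, y u.1 = x (Sum.inl u) := by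
      intro u; simp [hy, u.2]
    refine ⟨univ.inf' univ_nonempty (fun k => ∑ v, C k v * y v), ⟨y, ?_, ?_, rfl⟩, ?_⟩
    · intro v
      by_cases h : v = v₀
      · subst h; rw [hyv₀]; exact le_max_of_le_left (hx0 _)
      · rw [show y v = x (Sum.inl ⟨v, h⟩) from hyu ⟨v, h⟩]; exact hx0 _
    · intro i
      rw [sum_split_aux v₀ (fun v => A i v * y v)]
      rcases max_choice (x (Sum.inr true)) (x (Sum.inr false)) with h | h
      · have := hxc (i, true)
        simp only [hyu, hyv₀, hm, h]
        simpa using this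
      · have := hxc (i, false)
        simp only [hyu, hyv₀, hm, h]
        simpa using this
    · refine Finset.le_inf' _ _ ?_
      intro k _
      refine le_trans (Finset.inf'_le _ (Finset.mem_univ k)) ?_
      rw [sum_split_aux v₀ (fun v => C k v * y v)]
      simp only [hyu, hyv₀]
      by_cases hk : k = k₀
      · rw [hk]
        simp only [if_pos rfl, if_true, Fintype.sum_bool]
        have h1 : x (Sum.inr true) ≤ m := le_max_left _ _
        have h2 : x (Sum.inr false) ≤ m := le_max_right _ _
        have hc := hadj.le
        have : C k₀ v₀ / 2 * x (Sum.inr true) + C k₀ v₀ / 2 * x (Sum.inr false)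
            ≤ C k₀ v₀ * m := by nlinarith
        exact add_le_add_right this _
      · simp [hk, honly k hk]
  -- Nonemptiness
  have hne1 : S1.Nonempty := by
    refine ⟨_, (fun _ => 0), fun v => le_refl 0, fun i => by simp, rfl⟩
  have hne2 : S2.Nonempty := ⟨_, h12 hne1.choose_spec⟩
  by_cases hbdd : BddAbove S2
  · have hbdd1 : BddAbove S1 := hbdd.mono h12
    apply le_antisymm
    · exact csSup_le_csSup hbdd hne1 h12
    · refine csSup_le hne2 ?_
      intro w hw
      obtain ⟨w', hw', hle⟩ := h21 w hw
      exact hle.trans (le_csSup hbdd1 hw')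
  · have hbdd1 : ¬ BddAbove S1 := by
      rintro ⟨b, hb⟩
      refine hbdd ⟨b, ?_⟩
      intro w hw
      obtain ⟨w', hw', hle⟩ := h21 w hw
      exact hle.trans (hb hw')
    rw [Real.sSup_of_not_bddAbove hbdd1, Real.sSup_of_not_bddAbove hbdd]
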